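/- Let Σ be a finite relational signature, 𝔄 a finite Σ-structure having at least one guarded set and all of whose guarded sets have size at most n, and K a set of 2n constants. Let G be the tabloid whose vertices are the injections χ : A → K with A a guarded set of 𝔄 (with labels K_χ = range(χ) and τ_χ the χ-image of the atomic type of A in 𝔄, and edges between χ and χ' iff χ ∪ χ' is an injective function), and let T be the undirected unraveling of G from any node. Then 𝔄 is guarded bisimilar to 𝔄(T): there is a nonempty guarded bisimulation between 𝔄 and 𝔄(T). -/

import Mathlib

open FirstOrder

namespace GFPaper

variable {L : FirstOrder.Language} {M N : Type*} {K V : Type*}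

/-! ### Guarded sets, guarded tuples, partial isomorphisms, guarded bisimulations -/

/-- A guarded set of a `Σ`-structure is a nonempty (finite) subset contained in the set of
components of some tuple belonging to some relation of the structure. -/
def IsGuardedSet (SM : L.Structure M) (B : Set M) : Prop :=
  B.Nonempty ∧ ∃ (n : ℕ) (R : L.Relations n) (a : Fin n → M),
    SM.RelMap R a ∧ B ⊆ Set.range a

/-- A guarded tuple is a tuple of pairwise distinct elements whose set of components is
a guarded set. -/
def IsGuardedTuple (SM : L.Structure M) {k : ℕ} (a : Fin k → M) : Prop :=
  Function.Injective a ∧ IsGuardedSet SM (Set.range a)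

/-- A partial isomorphism between two `Σ`-structures: an injective map between finite subsets
preserving and reflecting all atomic relations.  The function `toFun` is total, but only its
restriction to `dom` is meaningful. -/
structure PartialIso (SM : L.Structure M) (SN : L.Structure N) where
  dom : Set M
  finite_dom : dom.Finite
  toFun : M → N
  injOn : Set.InjOn toFun dom
  rel_iff : ∀ {n : ℕ} (R : L.Relations n) (a : Fin n → M), (∀ i, a i ∈ dom) →
    (SM.RelMap R a ↔ SN.RelMap R (fun i => toFun (a i)))

/-- The range of a partial isomorphism. -/
def PartialIso.rng {SM : L.Structure M} {SN : L.Structure N} (α : PartialIso SM SN) : Set N :=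
  α.toFun '' α.dom

/-- A guarded bisimulation between two `Σ`-structures: a nonempty family of partial
isomorphisms between finite subsets satisfying the back-and-forth conditions over guarded
sets. -/
structure GuardedBisim (SM : L.Structure M) (SN : L.Structure N) where
  Z : Set (PartialIso SM SN)
  nonempty : Z.Nonempty
  forth : ∀ α ∈ Z, ∀ B₀ : Set M, IsGuardedSet SM B₀ →
    ∃ γ ∈ Z, B₀ ⊆ γ.dom ∧ ∀ x ∈ α.dom ∩ γ.dom, α.toFun x = γ.toFun x
  back : ∀ α ∈ Z, ∀ B₁ : Set N, IsGuardedSet SN B₁ →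
    ∃ γ ∈ Z, B₁ ⊆ γ.rng ∧ ∀ x ∈ α.dom, ∀ y ∈ γ.dom, α.toFun x = γ.toFun y → x = y

/-- `𝔄₀,ā ∼_g 𝔄₁,b̄` : some guarded bisimulation contains the map `ā ↦ b̄`. -/
def GBisimTuple (SM : L.Structure M) (SN : L.Structure N) {k : ℕ}
    (a : Fin k → M) (b : Fin k → N) : Prop :=
  ∃ (Z : GuardedBisim SM SN) (α : PartialIso SM SN), α ∈ Z.Z ∧
    α.dom = Set.range a ∧ ∀ i, α.toFun (a i) = b i

/-- Guarded bisimilarity has finite index on the guarded tuples of a structure: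
there is a finite set of guarded tuples such that every guarded tuple is guarded bisimilar
to one of them. -/
def FiniteGBisimIndex (SM : L.Structure M) : Prop :=
  ∃ S : Set (Σ k : ℕ, Fin k → M), S.Finite ∧
    ∀ ⦃k : ℕ⦄ (a : Fin k → M), IsGuardedTuple SM a →
      ∃ b : Fin k → M, (⟨k, b⟩ : Σ k : ℕ, Fin k → M) ∈ S ∧
        IsGuardedTuple SM b ∧ GBisimTuple SM SM a b

/-! ### Undirected unraveling and undirected bisimulation -/

/-- `t` extends `s` by one edge (i.e. `s` is obtained from `t` by deleting its last node). -/
def ExtendsBy (G : SimpleGraph V) (v₀ : V) (s t : Σ u : V, G.Walk v₀ u) : Prop :=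
  ∃ h : G.Adj s.1 t.1, t.2 = s.2.concat h

/-- The undirected unraveling of a graph `G` from a node `v₀`: nodes are the finite walks
of `G` starting at `v₀`, and edges join each walk of positive length to the walk obtained
by deleting its last node. -/
def unraveling (G : SimpleGraph V) (v₀ : V) : SimpleGraph (Σ u : V, G.Walk v₀ u) where
  Adj s t := ExtendsBy G v₀ s t ∨ ExtendsBy G v₀ t s
  symm := ⟨fun _ _ h => h.symm⟩
  loopless := ⟨fun s h => by
    rcases h with ⟨h, _⟩ | ⟨h, _⟩ <;> exact G.loopless.irrefl s.1 h⟩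

/-- The projection sending a node of the unraveling (a walk) to its terminal node. -/
def unravelingProj (G : SimpleGraph V) (v₀ : V) : (Σ u : V, G.Walk v₀ u) → V :=
  fun s => s.1

/-- An undirected bisimulation between node-labelled undirected graphs. -/
def IsUndirectedBisim {V₀ V₁ Λ : Type*} (G₀ : SimpleGraph V₀) (G₁ : SimpleGraph V₁)
    (ℓ₀ : V₀ → Λ) (ℓ₁ : V₁ → Λ) (Z : Set (V₀ × V₁)) : Prop :=
  ∀ p ∈ Z, ℓ₀ p.1 = ℓ₁ p.2 ∧
    (∀ w₀, G₀.Adj p.1 w₀ → ∃ w₁, G₁.Adj p.2 w₁ ∧ (w₀, w₁) ∈ Z) ∧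
    (∀ w₁, G₁.Adj p.2 w₁ → ∃ w₀, G₀.Adj p.1 w₀ ∧ (w₀, w₁) ∈ Z)

/-! ### Tabloids -/

/-- A tabloid over a relational signature `L` and a set `K` of constant names: an undirected
graph where every node `v` carries a set `consts v ⊆ K` of constants and an atomic type
over `consts v`, encoded as the collection `rel v` of atomic facts over `consts v`; the
types of adjacent nodes agree over their common constants. -/
structure Tabloid (L : FirstOrder.Language) (K : Type*) (V : Type*) where
  graph : SimpleGraph V
  consts : V → Set K
  rel : ∀ (_v : V) {n : ℕ}, L.Relations n → (Fin n → K) → Prop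
  rel_mem : ∀ (v : V) {n : ℕ} (R : L.Relations n) (c : Fin n → K),
    rel v R c → ∀ i, c i ∈ consts v
  compat : ∀ (v w : V), graph.Adj v w → ∀ {n : ℕ} (R : L.Relations n) (c : Fin n → K),
    (∀ i, c i ∈ consts v ∩ consts w) → (rel v R c ↔ rel w R c)

namespace Tabloid

variable (T : Tabloid L K V)

/-- The pairs `(v, c)` with `v` a node and `c` one of its constants. -/
def Pairs : Type _ := {q : V × K // q.2 ∈ T.consts q.1}

/-- The relation `(v,c) ≈ (v',c')` iff `c = c'` and `c` belongs to the constants of every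
node on the (unique, when the tabloid is a tree) path connecting `v` and `v'`. -/
def keq (p q : T.Pairs) : Prop :=
  p.1.2 = q.1.2 ∧
    ∀ w : T.graph.Walk p.1.1 q.1.1, w.IsPath → ∀ z ∈ w.support, p.1.2 ∈ T.consts z

/-- The set of nodes `v` witnessing simultaneously the classes `[v_i, c_i]`, i.e. such that
`c_i ∈ K_v` and `[v, c_i] = [v_i, c_i]` for all `i`. -/
def classSet {n : ℕ} (p : Fin n → T.Pairs) : Set V :=
  {v | ∀ i, ∃ h : (p i).1.2 ∈ T.consts v,
    Quot.mk T.keq ⟨((v, (p i).1.2) : V × K), h⟩ = Quot.mk T.keq (p i)}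

/-- The structure `𝔄(T)` associated to a (tree) tabloid: the universe is the set of
`≈`-classes `[v,c]`, and a tuple satisfies a relation iff some single node witnesses all
classes and its atomic type contains the corresponding fact. -/
def AT [L.IsRelational] : L.Structure (Quot T.keq) where
  funMap := fun f _ => isEmptyElim f
  RelMap := fun {n} R x =>
    ∃ (v : V) (c : Fin n → K) (h : ∀ i, c i ∈ T.consts v),
      (∀ i, Quot.mk T.keq ⟨((v, c i) : V × K), h i⟩ = x i) ∧ T.rel v R c

/-- The undirected unraveling of a tabloid from a node: the unraveling of the underlying
graph, each walk carrying the labels of its terminal node. -/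
def unravel (v₀ : V) : Tabloid L K (Σ u : V, T.graph.Walk v₀ u) where
  graph := unraveling T.graph v₀
  consts := fun s => T.consts s.1
  rel := fun s => T.rel s.1
  rel_mem := fun s _ R c h i => T.rel_mem s.1 R c h i
  compat := by
    intro s t hst
    rcases (show ExtendsBy T.graph v₀ s t ∨ ExtendsBy T.graph v₀ t s from hst) with
      ⟨h, _⟩ | ⟨h, _⟩ <;> intro n R c hc
    · exact T.compat s.1 t.1 h R c hc
    · exact (T.compat t.1 s.1 h R c (fun i => ⟨(hc i).2, (hc i).1⟩)).symm

/-- An isomorphism of a tabloid onto itself: a graph automorphism preserving both labels. -/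
structure Auto where
  toEquiv : V ≃ V
  adj_iff : ∀ z z', T.graph.Adj z z' ↔ T.graph.Adj (toEquiv z) (toEquiv z')
  consts_eq : ∀ z, T.consts (toEquiv z) = T.consts z
  rel_iff : ∀ (z : V) {n : ℕ} (R : L.Relations n) (c : Fin n → K),
    T.rel (toEquiv z) R c ↔ T.rel z R c

end Tabloid

/-! ### The tabloid built from a finite model -/

/-- `χ` is the graph of a function. -/
def IsFunGraph (χ : Set (M × K)) : Prop :=
  ∀ ⦃a b b'⦄, (a, b) ∈ χ → (a, b') ∈ χ → b = b'

/-- `χ` is the graph of an injective (partial) function. -/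
def IsInjGraph (χ : Set (M × K)) : Prop :=
  ∀ ⦃a a' b⦄, (a, b) ∈ χ → (a', b) ∈ χ → a = a'

/-- The vertices of the tabloid built from a structure: injections `χ : A → K` with `A`
a guarded set, encoded via their graphs. -/
def ChiVertex (SM : L.Structure M) (K : Type*) : Type _ :=
  {χ : Set (M × K) // IsFunGraph χ ∧ IsInjGraph χ ∧ IsGuardedSet SM {a | ∃ b, (a, b) ∈ χ}}

/-- The constants of the vertex `χ`: the range of `χ`. -/
def chiConsts {SM : L.Structure M} (χ : ChiVertex SM K) : Set K :=
  {b | ∃ a, (a, b) ∈ χ.1}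

/-- The atomic type of the vertex `χ`: the image under `χ` of the atomic type of its
domain in the structure. -/
def chiRel {SM : L.Structure M} (χ : ChiVertex SM K) {n : ℕ}
    (R : L.Relations n) (c : Fin n → K) : Prop :=
  ∃ a : Fin n → M, (∀ i, (a i, c i) ∈ χ.1) ∧ SM.RelMap R a

/-- Adjacency of vertices: `χ ∪ χ'` is an injective function (and `χ ≠ χ'`). -/
def chiAdj {SM : L.Structure M} (χ χ' : ChiVertex SM K) : Prop :=
  χ ≠ χ' ∧ IsFunGraph (χ.1 ∪ χ'.1) ∧ IsInjGraph (χ.1 ∪ χ'.1)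

/-! ### The guarded fragment of first-order logic -/

/-- Formulas of the guarded fragment of first-order logic over a relational signature `L`,
with variables drawn from `ℕ`: atomic formulas (including equalities), Boolean connectives,
and guarded quantification `∃ȳ (R(x̄ȳ) ∧ φ)` and `∀ȳ (R(x̄ȳ) → φ)`. -/
inductive GFormula (L : FirstOrder.Language) : Type _ where
  | equal : ℕ → ℕ → GFormula L
  | rel : ∀ {n : ℕ}, L.Relations n → (Fin n → ℕ) → GFormula L
  | not : GFormula L → GFormula L
  | and : GFormula L → GFormula L → GFormula L
  | or : GFormula L → GFormula L → GFormula L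
  | exGuard : ∀ {n : ℕ}, L.Relations n → (Fin n → ℕ) → Set ℕ → GFormula L → GFormula L
  | allGuard : ∀ {n : ℕ}, L.Relations n → (Fin n → ℕ) → Set ℕ → GFormula L → GFormula L

namespace GFormula

/-- The free variables of a formula. -/
def free : GFormula L → Set ℕ
  | equal i j => {i, j}
  | rel _ ts => Set.range ts
  | not φ => φ.free
  | and φ ψ => φ.free ∪ ψ.free
  | or φ ψ => φ.free ∪ ψ.free
  | exGuard _ ts ys φ => (Set.range ts ∪ φ.free) \ ys
  | allGuard _ ts ys φ => (Set.range ts ∪ φ.free) \ ys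

/-- Well-formedness for the guarded fragment: in every guarded quantification
`∃ȳ (R(x̄ȳ) ∧ φ)` resp. `∀ȳ (R(x̄ȳ) → φ)` the guard atom contains all free variables
of `φ` as well as all quantified variables. -/
def IsGF : GFormula L → Prop
  | equal _ _ => True
  | rel _ _ => True
  | not φ => φ.IsGF
  | and φ ψ => φ.IsGF ∧ ψ.IsGF
  | or φ ψ => φ.IsGF ∧ ψ.IsGF
  | exGuard _ ts ys φ => φ.free ⊆ Set.range ts ∧ ys ⊆ Set.range ts ∧ φ.IsGF
  | allGuard _ ts ys φ => φ.free ⊆ Set.range ts ∧ ys ⊆ Set.range ts ∧ φ.IsGF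

/-- Satisfaction of a guarded formula in a structure under a variable assignment. -/
def Sat (SM : L.Structure M) : GFormula L → (ℕ → M) → Prop
  | equal i j, β => β i = β j
  | rel R ts, β => SM.RelMap R (fun i => β (ts i))
  | not φ, β => ¬ Sat SM φ β
  | and φ ψ, β => Sat SM φ β ∧ Sat SM ψ β
  | or φ ψ, β => Sat SM φ β ∨ Sat SM ψ β
  | exGuard R ts ys φ, β => ∃ β' : ℕ → M, (∀ x ∉ ys, β' x = β x) ∧
      SM.RelMap R (fun i => β' (ts i)) ∧ Sat SM φ β'
  | allGuard R ts ys φ, β => ∀ β' : ℕ → M, (∀ x ∉ ys, β' x = β x) →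
      SM.RelMap R (fun i => β' (ts i)) → Sat SM φ β'

/-- Every subformula of `φ` has at most `n` free variables. -/
def WidthLE (n : ℕ) : GFormula L → Prop
  | equal i j => (({i, j} : Set ℕ)).ncard ≤ n
  | rel _ ts => (Set.range ts).ncard ≤ n
  | not φ => φ.WidthLE n
  | and φ ψ => (φ.free ∪ ψ.free).ncard ≤ n ∧ φ.WidthLE n ∧ ψ.WidthLE n
  | or φ ψ => (φ.free ∪ ψ.free).ncard ≤ n ∧ φ.WidthLE n ∧ ψ.WidthLE n
  | exGuard _ ts _ φ => (Set.range ts ∪ φ.free).ncard ≤ n ∧ φ.WidthLE n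
  | allGuard _ ts _ φ => (Set.range ts ∪ φ.free).ncard ≤ n ∧ φ.WidthLE n

end GFormula


/-! ### Auxiliary lemmas for the proof -/

section AuxGraph

open SimpleGraph

private lemma extendsBy_adj {G : SimpleGraph V} {v₀ : V} {s t : Σ u : V, G.Walk v₀ u}
    (h : ExtendsBy G v₀ s t) : (unraveling G v₀).Adj s t :=
  show ExtendsBy G v₀ s t ∨ ExtendsBy G v₀ t s from Or.inl h

private lemma extendsBy_length {G : SimpleGraph V} {v₀ : V} {s t : Σ u : V, G.Walk v₀ u}
    (h : ExtendsBy G v₀ s t) : t.2.length = s.2.length + 1 := by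
  obtain ⟨h, he⟩ := h
  rw [he, SimpleGraph.Walk.length_concat]

private lemma extendsBy_unique {G : SimpleGraph V} {v₀ : V} {s t t' : Σ u : V, G.Walk v₀ u}
    (h1 : ExtendsBy G v₀ t s) (h2 : ExtendsBy G v₀ t' s) : t = t' := by
  obtain ⟨u, w⟩ := t
  obtain ⟨u', w'⟩ := t'
  obtain ⟨x, ws⟩ := s
  obtain ⟨h, he⟩ := h1
  obtain ⟨h', he'⟩ := h2
  simp only at h h' he he'
  have hr : Walk.cons h.symm w.reverse = Walk.cons h'.symm w'.reverse := by
    have := congrArg Walk.reverse (he.symm.trans he')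
    rwa [Walk.reverse_concat, Walk.reverse_concat] at this
  injection hr with e1 e2 e3 e4
  subst e2
  have h3 : w.reverse = w'.reverse := eq_of_heq e4
  have : w = w' := by
    have := congrArg Walk.reverse h3
    rwa [Walk.reverse_reverse, Walk.reverse_reverse] at this
  subst this
  rfl

private lemma mem_support_rotate [DecidableEq V] {G : SimpleGraph V} {u v z : V} {c : G.Walk v v}
    (h : u ∈ c.support) (hz : z ∈ (c.rotate u h).support) : z ∈ c.support := by
  rw [Walk.support_eq_cons] at hz
  rcases List.mem_cons.mp hz with rfl | hz
  · exact h
  · exact List.mem_of_mem_tail (((Walk.support_rotate c u h).mem_iff).mp hz)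

private lemma unraveling_isAcyclic (G : SimpleGraph V) (v₀ : V) :
    (unraveling G v₀).IsAcyclic := by
  classical
  intro v c hc
  -- pick a vertex of maximal walk-length in the support of the cycle
  have hne : c.support.toFinset.Nonempty := by
    refine ⟨v, ?_⟩
    rw [List.mem_toFinset]
    exact Walk.start_mem_support c
  obtain ⟨m, hm, hmax⟩ := c.support.toFinset.exists_max_image (fun s => s.2.length) hne
  rw [List.mem_toFinset] at hm
  have hmax' : ∀ z ∈ c.support, z.2.length ≤ m.2.length := by
    intro z hz
    exact hmax z (List.mem_toFinset.mpr hz)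
  have hc' := hc.rotate hm
  set c' := c.rotate m hm with hc'def
  have hsup : ∀ z ∈ c'.support, z ∈ c.support := fun z hz => mem_support_rotate hm hz
  obtain ⟨b, h, p, hcons⟩ := Walk.not_nil_iff.mp hc'.not_nil
  rw [hcons] at hc'
  obtain ⟨hp, hedge⟩ := (Walk.cons_isCycle_iff p h).mp hc'
  have hlen : 2 ≤ p.length := by
    have := hc'.three_le_length
    simp only [Walk.length_cons] at this
    omega
  have hbm : b ≠ m := by
    rintro rfl
    have : p = Walk.nil := Subtype.ext_iff.mp (SimpleGraph.Path.loop_eq ⟨p, hp⟩)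
    rw [this] at hlen
    simp at hlen
  obtain ⟨b', h2, q, hq⟩ := Walk.exists_eq_cons_of_ne (Ne.symm hbm) p.reverse
  -- b and b' are both neighbours of m inside the cycle
  have hbsup : b ∈ c'.support := by
    rw [hcons, Walk.support_cons]
    exact List.mem_cons_of_mem _ (Walk.start_mem_support p)
  have hb'sup : b' ∈ c'.support := by
    rw [hcons, Walk.support_cons]
    refine List.mem_cons_of_mem _ ?_
    have : b' ∈ p.reverse.support := by
      rw [hq, Walk.support_cons]
      exact List.mem_cons_of_mem _ (Walk.start_mem_support q)
    rwa [Walk.support_reverse, List.mem_reverse] at this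
  have hext : ∀ b₀ : Σ u : V, G.Walk v₀ u, b₀ ∈ c'.support →
      (unraveling G v₀).Adj m b₀ → ExtendsBy G v₀ b₀ m := by
    intro b₀ hb₀ hadj
    rcases (show ExtendsBy G v₀ m b₀ ∨ ExtendsBy G v₀ b₀ m from hadj) with hE | hE
    · exfalso
      have := extendsBy_length hE
      have := hmax' b₀ (hsup b₀ hb₀)
      omega
    · exact hE
  have heb : ExtendsBy G v₀ b m := hext b hbsup h
  have heb' : ExtendsBy G v₀ b' m := hext b' hb'sup h2
  have : b = b' := extendsBy_unique heb heb'
  subst this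
  -- the edge from m to b appears in p, contradiction
  apply hedge
  have : s(m, b) ∈ p.reverse.edges := by
    rw [hq, Walk.edges_cons]
    exact List.mem_cons_self
  rwa [Walk.edges_reverse, List.mem_reverse] at this

private lemma unraveling_path_unique {G : SimpleGraph V} {v₀ : V}
    {s t : Σ u : V, G.Walk v₀ u} (p q : (unraveling G v₀).Walk s t)
    (hp : p.IsPath) (hq : q.IsPath) : p = q := by
  have := isAcyclic_iff_path_unique.mp (unraveling_isAcyclic G v₀) ⟨p, hp⟩ ⟨q, hq⟩
  exact Subtype.ext_iff.mp this

private lemma unraveling_reachable (G : SimpleGraph V) (v₀ : V)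
    (s : Σ u : V, G.Walk v₀ u) : (unraveling G v₀).Reachable ⟨v₀, Walk.nil⟩ s := by
  obtain ⟨u, w⟩ := s
  induction w using SimpleGraph.Walk.concatRec with
  | Hnil => exact Reachable.refl _
  | Hconcat p h ih =>
    exact ih.trans (SimpleGraph.Adj.reachable (extendsBy_adj ⟨h, rfl⟩))

private lemma unraveling_preconnected (G : SimpleGraph V) (v₀ : V) :
    (unraveling G v₀).Preconnected := fun s t =>
  (unraveling_reachable G v₀ s).symm.trans (unraveling_reachable G v₀ t)

end AuxGraph


section AuxKeq

open SimpleGraph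

variable {W : Type*}

private lemma path_loop_eq {G : SimpleGraph W} {v : W} {w : G.Walk v v} (hw : w.IsPath) :
    w = Walk.nil := Subtype.ext_iff.mp (SimpleGraph.Path.loop_eq ⟨w, hw⟩)

private lemma keq_refl (S : Tabloid L K W) (p : S.Pairs) : S.keq p p := by
  refine ⟨rfl, ?_⟩
  intro w hw z hz
  rw [path_loop_eq hw] at hz
  simp only [Walk.support_nil, List.mem_singleton] at hz
  subst hz
  exact p.2

private lemma keq_symm (S : Tabloid L K W) {p q : S.Pairs} (h : S.keq p q) : S.keq q p := by
  obtain ⟨h1, h2⟩ := h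
  refine ⟨h1.symm, ?_⟩
  intro w hw z hz
  rw [← h1]
  exact h2 w.reverse hw.reverse z (by rwa [Walk.support_reverse, List.mem_reverse])

private lemma keq_trans (S : Tabloid L K W) (hconn : S.graph.Preconnected)
    (huniq : ∀ ⦃a b : W⦄ (p q : S.graph.Walk a b), p.IsPath → q.IsPath → p = q)
    {p q r : S.Pairs} (h1 : S.keq p q) (h2 : S.keq q r) : S.keq p r := by
  classical
  obtain ⟨e1, m1⟩ := h1
  obtain ⟨e2, m2⟩ := h2
  refine ⟨e1.trans e2, ?_⟩
  intro w hw z hz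
  obtain ⟨w1⟩ := hconn p.1.1 q.1.1
  obtain ⟨w2⟩ := hconn q.1.1 r.1.1
  have hweq : w = (w1.bypass.append w2.bypass).bypass :=
    huniq w _ hw (Walk.bypass_isPath _)
  rw [hweq] at hz
  have hz2 := Walk.support_bypass_subset _ hz
  rw [Walk.support_append] at hz2
  rcases List.mem_append.mp hz2 with hz3 | hz3
  · exact m1 w1.bypass (Walk.bypass_isPath w1) z hz3
  · rw [e1]
    exact m2 w2.bypass (Walk.bypass_isPath w2) z (List.mem_of_mem_tail hz3)

private lemma keq_equivalence (S : Tabloid L K W) (hconn : S.graph.Preconnected)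
    (huniq : ∀ ⦃a b : W⦄ (p q : S.graph.Walk a b), p.IsPath → q.IsPath → p = q) :
    Equivalence S.keq :=
  { refl := keq_refl S, symm := fun h => keq_symm S h,
    trans := fun h1 h2 => keq_trans S hconn huniq h1 h2 }

private lemma quot_keq_eq {S : Tabloid L K W} (h : Equivalence S.keq) {p q : S.Pairs} :
    Quot.mk S.keq p = Quot.mk S.keq q ↔ S.keq p q := by
  rw [Quot.eq]
  exact h.eqvGen_iff

private lemma rel_walk (S : Tabloid L K W) {a b : W} (w : S.graph.Walk a b)
    {n : ℕ} (R : L.Relations n) (c : Fin n → K) :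
    (∀ i, ∀ z ∈ w.support, c i ∈ S.consts z) → S.rel a R c → S.rel b R c := by
  induction w with
  | nil => exact fun _ h => h
  | @cons a x b hadj p ih =>
    intro hmem h
    refine ih (fun i z hz => hmem i z
      (by rw [Walk.support_cons]; exact List.mem_cons_of_mem _ hz)) ?_
    refine (S.compat a x hadj R c fun i => ⟨?_, ?_⟩).mp h
    · exact hmem i a (Walk.start_mem_support _)
    · exact hmem i x
        (by rw [Walk.support_cons]; exact List.mem_cons_of_mem _ (Walk.start_mem_support p))

end AuxKeq

section AuxMain

open SimpleGraph

variable {SM : L.Structure M}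

private lemma preimage_walk {G : Tabloid L K (ChiVertex SM K)}
    (hgraph : ∀ χ χ' : ChiVertex SM K, G.graph.Adj χ χ' ↔ chiAdj χ χ')
    (hconsts : ∀ χ : ChiVertex SM K, G.consts χ = chiConsts χ) {v₀ : ChiVertex SM K}
    {s t : Σ u : ChiVertex SM K, G.graph.Walk v₀ u}
    (w : (unraveling G.graph v₀).Walk s t) (c : K) :
    (∀ z ∈ w.support, c ∈ G.consts z.1) →
      ∀ (a a' : M), (a, c) ∈ s.1.1 → (a', c) ∈ t.1.1 → a = a' := by
  induction w with
  | @nil z => exact fun _ a a' ha ha' => z.1.2.2.1 ha ha'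
  | @cons s x t hadj p ih =>
    intro hmem a a' ha ha'
    have hcx : c ∈ chiConsts x.1 := by
      rw [← hconsts]
      exact hmem x
        (by rw [Walk.support_cons]; exact List.mem_cons_of_mem _ (Walk.start_mem_support p))
    obtain ⟨b, hb⟩ := hcx
    have hinj : IsInjGraph (s.1.1 ∪ x.1.1) := by
      rcases (show ExtendsBy G.graph v₀ s x ∨ ExtendsBy G.graph v₀ x s from hadj) with
        ⟨h, _⟩ | ⟨h, _⟩
      · exact ((hgraph _ _).mp h).2.2
      · have := ((hgraph _ _).mp h).2.2
        rwa [Set.union_comm] at this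
    have hab : a = b := hinj (Or.inl ha) (Or.inr hb)
    subst hab
    exact ih (fun z hz => hmem z
      (by rw [Walk.support_cons]; exact List.mem_cons_of_mem _ hz)) a a' hb ha'

private lemma mem_consts_of_mem {G : Tabloid L K (ChiVertex SM K)}
    (hconsts : ∀ χ : ChiVertex SM K, G.consts χ = chiConsts χ) {v₀ : ChiVertex SM K}
    {s : Σ u : ChiVertex SM K, G.graph.Walk v₀ u} {a : M} {b : K}
    (hab : (a, b) ∈ s.1.1) : b ∈ (G.unravel v₀).consts s :=
  (hconsts s.1).symm ▸ (⟨a, hab⟩ : b ∈ chiConsts s.1)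

open Classical in
private noncomputable def nodeFun (G : Tabloid L K (ChiVertex SM K)) (v₀ : ChiVertex SM K)
    (hconsts : ∀ χ : ChiVertex SM K, G.consts χ = chiConsts χ)
    (junk : Quot (G.unravel v₀).keq)
    (s : Σ u : ChiVertex SM K, G.graph.Walk v₀ u) (a : M) : Quot (G.unravel v₀).keq :=
  if h : ∃ b, (a, b) ∈ s.1.1 then
    Quot.mk _ (⟨(s, h.choose), mem_consts_of_mem hconsts h.choose_spec⟩ : (G.unravel v₀).Pairs)
  else junk

private lemma nodeFun_eq {G : Tabloid L K (ChiVertex SM K)} {v₀ : ChiVertex SM K}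
    (hconsts : ∀ χ : ChiVertex SM K, G.consts χ = chiConsts χ)
    (junk : Quot (G.unravel v₀).keq)
    {s : Σ u : ChiVertex SM K, G.graph.Walk v₀ u} {a : M} {b : K}
    (hab : (a, b) ∈ s.1.1) (hb : b ∈ (G.unravel v₀).consts s) :
    nodeFun G v₀ hconsts junk s a = Quot.mk _ (⟨(s, b), hb⟩ : (G.unravel v₀).Pairs) := by
  have h : ∃ b, (a, b) ∈ s.1.1 := ⟨b, hab⟩
  simp only [nodeFun]
  rw [dif_pos h]
  congr 1
  exact Subtype.ext (by
    show ((s, h.choose) : (Σ u : ChiVertex SM K, G.graph.Walk v₀ u) × K) = (s, b)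
    rw [s.1.2.1 h.choose_spec hab])

private noncomputable def nodePIso [Finite M] [L.IsRelational]
    (G : Tabloid L K (ChiVertex SM K)) (v₀ : ChiVertex SM K)
    (hconsts : ∀ χ : ChiVertex SM K, G.consts χ = chiConsts χ)
    (hrel : ∀ (χ : ChiVertex SM K) {m : ℕ} (R : L.Relations m) (c : Fin m → K),
      G.rel χ R c ↔ chiRel χ R c)
    (hequiv : Equivalence (G.unravel v₀).keq)
    (hconn : (G.unravel v₀).graph.Preconnected)
    (junk : Quot (G.unravel v₀).keq)
    (s : Σ u : ChiVertex SM K, G.graph.Walk v₀ u) :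
    PartialIso SM (G.unravel v₀).AT where
  dom := {a | ∃ b, (a, b) ∈ s.1.1}
  finite_dom := Set.toFinite _
  toFun := nodeFun G v₀ hconsts junk s
  injOn := by
    intro a ha a' ha' heq
    obtain ⟨b, hb⟩ := ha
    obtain ⟨b', hb'⟩ := ha'
    rw [nodeFun_eq hconsts junk hb (mem_consts_of_mem hconsts hb),
        nodeFun_eq hconsts junk hb' (mem_consts_of_mem hconsts hb')] at heq
    have hk := (quot_keq_eq hequiv).mp heq
    have hbb : b = b' := hk.1
    subst hbb
    exact s.1.2.2.1 hb hb'
  rel_iff := by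
    intro m R a ha
    constructor
    · intro hR
      refine ⟨s, fun i => (ha i).choose,
        fun i => mem_consts_of_mem hconsts (ha i).choose_spec, fun i => ?_, ?_⟩
      · exact (nodeFun_eq hconsts junk (ha i).choose_spec _).symm
      · exact (hrel s.1 R _).mpr ⟨a, fun i => (ha i).choose_spec, hR⟩
    · rintro ⟨t, c, hmem, hcls, htrel⟩
      have hkeq : ∀ i, (G.unravel v₀).keq ⟨(t, c i), hmem i⟩
          ⟨(s, (ha i).choose), mem_consts_of_mem hconsts (ha i).choose_spec⟩ := by
        intro i
        refine (quot_keq_eq hequiv).mp ?_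
        rw [hcls i]
        exact nodeFun_eq hconsts junk (ha i).choose_spec _
      classical
      obtain ⟨w0⟩ := hconn t s
      have hrelS : (G.unravel v₀).rel s R c := by
        refine rel_walk _ w0.bypass R c (fun i z hz => ?_) htrel
        exact (hkeq i).2 w0.bypass (Walk.bypass_isPath _) z hz
      have hrelG : G.rel s.1 R c := hrelS
      obtain ⟨a', ha', hRa'⟩ := (hrel s.1 R c).mp hrelG
      have haa : a' = a := by
        funext i
        have hc : c i = (ha i).choose := (hkeq i).1
        refine s.1.2.2.1 (ha' i) ?_
        rw [hc]
        exact (ha i).choose_spec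
      rwa [haa] at hRa'

end AuxMain

/-- Let `𝔄` be a finite structure having at least one guarded set and all
of whose guarded sets have size at most `n`, let `K` have `2n` constants, let `G` be the
tabloid of injections `χ : A → K` of guarded sets into `K` (with the labels and adjacency as
described), and `T` its undirected unraveling from any node. Then `𝔄` is guarded bisimilar
to `𝔄(T)`. -/
theorem structure_gbisim_unravel {L : FirstOrder.Language} [L.IsRelational] {M : Type*}
    [Finite M] (SM : L.Structure M) (n : ℕ)
    (hex : ∃ B : Set M, IsGuardedSet SM B)
    (hn : ∀ B : Set M, IsGuardedSet SM B → B.ncard ≤ n)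
    {K : Type*} [Finite K] (hK : Nat.card K = 2 * n)
    (G : Tabloid L K (ChiVertex SM K))
    (hgraph : ∀ χ χ' : ChiVertex SM K, G.graph.Adj χ χ' ↔ chiAdj χ χ')
    (hconsts : ∀ χ : ChiVertex SM K, G.consts χ = chiConsts χ)
    (hrel : ∀ (χ : ChiVertex SM K) {m : ℕ} (R : L.Relations m) (c : Fin m → K),
      G.rel χ R c ↔ chiRel χ R c)
    (v₀ : ChiVertex SM K) :
    Nonempty (GuardedBisim SM (G.unravel v₀).AT) := by
  classical
  obtain ⟨B0, hB0⟩ := hex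
  have hn1 : 1 ≤ n := by
    have hpos : 0 < B0.ncard := (Set.ncard_pos (Set.toFinite B0)).mpr hB0.1
    have := hn B0 hB0
    omega
  have hKpos : 0 < Nat.card K := by rw [hK]; omega
  have hKne : Nonempty K := (Nat.card_pos_iff.mp hKpos).1
  obtain ⟨k0⟩ := hKne
  have huniq : ∀ ⦃a b : Σ u : ChiVertex SM K, G.graph.Walk v₀ u⦄
      (p q : (G.unravel v₀).graph.Walk a b), p.IsPath → q.IsPath → p = q :=
    fun a b p q hp hq => unraveling_path_unique p q hp hq
  have hconn : (G.unravel v₀).graph.Preconnected := unraveling_preconnected G.graph v₀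
  have hequiv : Equivalence (G.unravel v₀).keq := keq_equivalence _ hconn huniq
  obtain ⟨a0, b0, hab0⟩ : ∃ a b, (a, b) ∈ v₀.1 := by
    obtain ⟨a0, b0, hb0⟩ := v₀.2.2.2.1
    exact ⟨a0, b0, hb0⟩
  have hroot : (b0 : K) ∈ (G.unravel v₀).consts ⟨v₀, SimpleGraph.Walk.nil⟩ :=
    mem_consts_of_mem hconsts (s := ⟨v₀, SimpleGraph.Walk.nil⟩) hab0
  set junk : Quot (G.unravel v₀).keq :=
    Quot.mk _ (⟨(⟨v₀, SimpleGraph.Walk.nil⟩, b0), hroot⟩ : (G.unravel v₀).Pairs) with hjunk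
  set Φ := nodePIso G v₀ hconsts hrel hequiv hconn junk with hΦ
  refine ⟨⟨Set.range Φ, ⟨Φ ⟨v₀, SimpleGraph.Walk.nil⟩, ⟨⟨v₀, SimpleGraph.Walk.nil⟩, rfl⟩⟩, ?_, ?_⟩⟩
  · -- forth
    rintro α ⟨s, rfl⟩ B₁ hB₁
    obtain ⟨hBne, m, R, g, hRg, hsub⟩ := hB₁
    set A : Set M := Set.range g with hA
    have hAg : IsGuardedSet SM A := ⟨hBne.mono hsub, m, R, g, hRg, subset_rfl⟩
    set D : Set M := A \ {a | ∃ b, (a, b) ∈ s.1.1} with hD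
    set C : Set K := (chiConsts s.1)ᶜ with hC
    have hdomG : IsGuardedSet SM {a | ∃ b, (a, b) ∈ s.1.1} := s.1.2.2.2
    have hcc : (chiConsts s.1).ncard ≤ n := by
      have himg : chiConsts s.1 =
          (fun a => if h : ∃ b, (a, b) ∈ s.1.1 then h.choose else k0) ''
            {a | ∃ b, (a, b) ∈ s.1.1} := by
        ext b
        constructor
        · rintro ⟨a, hab⟩
          refine ⟨a, ⟨b, hab⟩, ?_⟩
          have hex2 : ∃ b, (a, b) ∈ s.1.1 := ⟨b, hab⟩
          simp only [dif_pos hex2]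
          exact s.1.2.1 hex2.choose_spec hab
        · rintro ⟨a, ha, rfl⟩
          refine ⟨a, ?_⟩
          have ha' : ∃ b, (a, b) ∈ s.1.1 := ha
          simp only [dif_pos ha']
          exact ha'.choose_spec
      rw [himg]
      exact le_trans (Set.ncard_image_le (Set.toFinite _)) (hn _ hdomG)
    have hCcard : n ≤ C.ncard := by
      have hcompl := Set.ncard_add_ncard_compl (chiConsts s.1)
      rw [← hC, hK] at hcompl
      omega
    have hDcard : D.ncard ≤ n :=
      le_trans (Set.ncard_le_ncard Set.diff_subset (Set.toFinite _)) (hn A hAg)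
    haveI : Fintype D := Fintype.ofFinite _
    haveI : Fintype C := Fintype.ofFinite _
    obtain ⟨e⟩ : Nonempty (D ↪ C) := Function.Embedding.nonempty_of_card_le (by
      rw [← Nat.card_eq_fintype_card, ← Nat.card_eq_fintype_card,
        Nat.card_coe_set_eq, Nat.card_coe_set_eq]
      omega)
    set ξ : M → K := fun a =>
      if h : ∃ b, (a, b) ∈ s.1.1 then h.choose
      else if h2 : a ∈ D then (e ⟨a, h2⟩ : K) else k0 with hxi
    have hx_spec : ∀ a, (∃ b, (a, b) ∈ s.1.1) → (a, ξ a) ∈ s.1.1 := by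
      intro a h
      simp only [hxi, dif_pos h]
      exact h.choose_spec
    have hx_e : ∀ a (h : a ∈ D), ξ a = (e ⟨a, h⟩ : K) := by
      intro a h
      have hnd : ¬ ∃ b, (a, b) ∈ s.1.1 := h.2
      simp only [hxi, dif_neg hnd, dif_pos h]
    have hval_not : ∀ a, a ∈ D → ξ a ∉ chiConsts s.1 := by
      intro a ha
      rw [hx_e a ha]
      exact (e ⟨a, ha⟩).2
    set χ' : Set (M × K) := {p | p.1 ∈ A ∧ p.2 = ξ p.1} with hchi'
    have hchi'mem : ∀ {a : M} {b : K}, (a, b) ∈ χ' ↔ a ∈ A ∧ b = ξ a :=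
      fun {a b} => Iff.rfl
    have hfun' : IsFunGraph χ' := by
      intro a b b' h1 h2
      obtain ⟨-, e1⟩ := hchi'mem.mp h1
      obtain ⟨-, e2⟩ := hchi'mem.mp h2
      exact e1.trans e2.symm
    have hinj' : IsInjGraph χ' := by
      intro a a' b h1g h2g
      obtain ⟨haA, e1⟩ := hchi'mem.mp h1g
      obtain ⟨ha'A, e2⟩ := hchi'mem.mp h2g
      have hb' : ξ a = ξ a' := e1.symm.trans e2
      by_cases h1 : ∃ b, (a, b) ∈ s.1.1 <;> by_cases h2 : ∃ b, (a', b) ∈ s.1.1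
      · refine s.1.2.2.1 (hx_spec a h1) ?_
        rw [hb']
        exact hx_spec a' h2
      · exfalso
        apply hval_not a' ⟨ha'A, h2⟩
        rw [← hb']
        exact ⟨a, hx_spec a h1⟩
      · exfalso
        apply hval_not a ⟨haA, h1⟩
        rw [hb']
        exact ⟨a', hx_spec a' h2⟩
      · have hd : a ∈ D := ⟨haA, h1⟩
        have hd' : a' ∈ D := ⟨ha'A, h2⟩
        rw [hx_e a hd, hx_e a' hd'] at hb'
        have := e.injective (Subtype.coe_injective hb')
        exact congrArg Subtype.val this
    have hdomeq : {a | ∃ b, (a, b) ∈ χ'} = A := by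
      ext a
      constructor
      · rintro ⟨b, hbA, -⟩
        exact hbA
      · intro ha
        exact ⟨ξ a, ha, rfl⟩
    set χ'' : ChiVertex SM K := ⟨χ', hfun', hinj', by rw [hdomeq]; exact hAg⟩ with hchi''
    have hfunU : IsFunGraph (s.1.1 ∪ χ') := by
      rintro a b b' (hb | hbx) (hb' | hb'x)
      · exact s.1.2.1 hb hb'
      · obtain ⟨haA, e1⟩ := hchi'mem.mp hb'x
        rw [e1]
        exact s.1.2.1 hb (hx_spec a ⟨b, hb⟩)
      · obtain ⟨haA, e1⟩ := hchi'mem.mp hbx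
        rw [e1]
        exact (s.1.2.1 hb' (hx_spec a ⟨b', hb'⟩)).symm
      · exact hfun' hbx hb'x
    have hinjU : IsInjGraph (s.1.1 ∪ χ') := by
      rintro a a' b (hb | hbx) (hb' | hb'x)
      · exact s.1.2.2.1 hb hb'
      · obtain ⟨ha'A, e2⟩ := hchi'mem.mp hb'x
        by_cases h2 : ∃ b, (a', b) ∈ s.1.1
        · refine s.1.2.2.1 hb ?_
          rw [e2]
          exact hx_spec a' h2
        · exfalso
          apply hval_not a' ⟨ha'A, h2⟩
          rw [← e2]
          exact ⟨a, hb⟩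
      · obtain ⟨haA, e1⟩ := hchi'mem.mp hbx
        by_cases h1 : ∃ b, (a, b) ∈ s.1.1
        · refine s.1.2.2.1 ?_ hb'
          rw [e1]
          exact hx_spec a h1
        · exfalso
          apply hval_not a ⟨haA, h1⟩
          rw [← e1]
          exact ⟨a', hb'⟩
      · exact hinj' hbx hb'x
    by_cases hchieq : χ'' = s.1
    · -- the new vertex coincides with the current one
      refine ⟨Φ s, ⟨s, rfl⟩, ?_, fun x _ => rfl⟩
      have : χ' = s.1.1 := congrArg Subtype.val hchieq
      intro x hx
      show x ∈ {a | ∃ b, (a, b) ∈ s.1.1}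
      rw [← this, hdomeq]
      exact hsub hx
    · have hadjG : G.graph.Adj s.1 χ'' :=
        (hgraph s.1 χ'').mpr ⟨fun h => hchieq h.symm, hfunU, hinjU⟩
      set t : Σ u : ChiVertex SM K, G.graph.Walk v₀ u := ⟨χ'', s.2.concat hadjG⟩ with ht
      have hadjT : (G.unravel v₀).graph.Adj s t :=
        show ExtendsBy G.graph v₀ s t ∨ ExtendsBy G.graph v₀ t s from Or.inl ⟨hadjG, rfl⟩
      have hst : s ≠ t := by
        intro h
        exact hchieq (congrArg Sigma.fst h).symm
      refine ⟨Φ t, ⟨t, rfl⟩, ?_, ?_⟩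
      · intro x hx
        show x ∈ {a | ∃ b, (a, b) ∈ t.1.1}
        show x ∈ {a | ∃ b, (a, b) ∈ χ'}
        rw [hdomeq]
        exact hsub hx
      · intro x hxmem
        obtain ⟨hx1, hx2⟩ := hxmem
        have hxA : x ∈ A := by rw [← hdomeq]; exact hx2
        have hxs : (x, ξ x) ∈ s.1.1 := hx_spec x hx1
        have hxt : (x, ξ x) ∈ t.1.1 := ⟨hxA, rfl⟩
        show (Φ s).toFun x = (Φ t).toFun x
        show nodeFun G v₀ hconsts junk s x = nodeFun G v₀ hconsts junk t x
        rw [nodeFun_eq hconsts junk hxs (mem_consts_of_mem hconsts hxs),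
            nodeFun_eq hconsts junk hxt (mem_consts_of_mem hconsts hxt)]
        apply Quot.sound
        refine ⟨rfl, ?_⟩
        intro w hw z hz
        have hcanon : (SimpleGraph.Walk.cons hadjT SimpleGraph.Walk.nil).IsPath := by
          rw [SimpleGraph.Walk.cons_isPath_iff]
          refine ⟨SimpleGraph.Walk.IsPath.nil, ?_⟩
          simp only [SimpleGraph.Walk.support_nil, List.mem_singleton]
          exact hst
        have hweq : w = SimpleGraph.Walk.cons hadjT SimpleGraph.Walk.nil :=
          huniq w _ hw hcanon
        rw [hweq] at hz
        simp only [SimpleGraph.Walk.support_cons, SimpleGraph.Walk.support_nil,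
          List.mem_cons, List.mem_singleton] at hz
        rcases hz with rfl | rfl | h
        · exact mem_consts_of_mem hconsts hxs
        · exact mem_consts_of_mem hconsts hxt
        · exact absurd h (by simp)
  · -- back
    rintro α ⟨s, rfl⟩ B₁ hB₁
    obtain ⟨hBne, m, R, x, hRx, hsub⟩ := hB₁
    obtain ⟨t, c, hmem, hcls, htrel⟩ := hRx
    have htrelG : G.rel t.1 R c := htrel
    obtain ⟨g, hg, hRg⟩ := (hrel t.1 R c).mp htrelG
    refine ⟨Φ t, ⟨t, rfl⟩, ?_, ?_⟩
    · intro y hy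
      obtain ⟨i, rfl⟩ := hsub hy
      refine ⟨g i, ⟨c i, hg i⟩, ?_⟩
      show nodeFun G v₀ hconsts junk t (g i) = x i
      rw [nodeFun_eq hconsts junk (hg i) (hmem i)]
      exact hcls i
    · intro xx hxx yy hyy heq
      obtain ⟨b, hb⟩ := hxx
      obtain ⟨b', hb'⟩ := hyy
      have heq' : nodeFun G v₀ hconsts junk s xx = nodeFun G v₀ hconsts junk t yy := heq
      rw [nodeFun_eq hconsts junk hb (mem_consts_of_mem hconsts hb),
          nodeFun_eq hconsts junk hb' (mem_consts_of_mem hconsts hb')] at heq'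
      obtain ⟨hbe, hpath⟩ := (quot_keq_eq hequiv).mp heq'
      have hbe2 : b = b' := hbe
      obtain ⟨w0⟩ := hconn s t
      refine preimage_walk hgraph hconsts w0.bypass b
        (fun z hz => hpath w0.bypass (SimpleGraph.Walk.bypass_isPath _) z hz) xx yy hb ?_
      rw [hbe2]
      exact hb'

end GFPaper
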